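/- Let G be a finite tree (a connected acyclic simple graph on a nonempty finite vertex set) and let h : V → ℕ with h v ≥ 2 for every v. The Latvian game on G (each sage sees exactly its neighbors) is winnable if and only if G has a subgraph T' that is itself a tree (nonempty, connected, and acyclic) such that h v ≤ 2^(deg_{T'} v) for every vertex v of T', where deg_{T'} v is the degree of v in T'. -/

import Mathlib

/-- A Czech hat game on the digraph with adjacency `D` (sage `v` sees sage `u`
iff `D v u`), guessness `g`, and hatness `h`, is winnable: there is a strategy
assigning to each sage `v` a set of `g v` guesses, depending only on the hats
she sees, such that for every coloring some sage guesses her own hat color. -/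
def HatGame.Winnable {V : Type*} (D : V → V → Prop) (g h : V → ℕ) : Prop :=
  ∃ F : ∀ v : V, (∀ u : V, Fin (h u)) → Finset (Fin (h v)),
    (∀ (v : V) (c c' : ∀ u : V, Fin (h u)),
        (∀ u : V, D v u → c u = c' u) → F v c = F v c') ∧
    (∀ (v : V) (c : ∀ u : V, Fin (h u)), (F v c).card = g v) ∧
    (∀ c : ∀ u : V, Fin (h u), ∃ v : V, c v ∈ F v c)

namespace HatTree

open Function SimpleGraph

variable {V : Type*}

/-- Function form of a Latvian strategy that wins on all colorings satisfying `P`. -/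
def WinFn (D : V → V → Prop) (h : V → ℕ) (P : ∀ u : V, Fin (h u) → Prop) : Prop :=
  ∃ f : ∀ v : V, (∀ u : V, Fin (h u)) → Fin (h v),
    (∀ (v : V) (c c' : ∀ u : V, Fin (h u)),
      (∀ u : V, D v u → c u = c' u) → f v c = f v c') ∧
    (∀ c : ∀ u : V, Fin (h u), (∀ u, P u (c u)) → ∃ v, c v = f v c)

theorem winFn_of_winnable {D : V → V → Prop} {h : V → ℕ}
    (H : HatGame.Winnable D (fun _ => 1) h) : WinFn D h (fun _ _ => True) := by
  obtain ⟨F, hdep, hcard, hwin⟩ := H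
  have hpos : ∀ v c, (F v c).Nonempty := by
    intro v c
    rw [← Finset.card_pos, hcard]; norm_num
  refine ⟨fun v c => (F v c).min' (hpos v c), ?_, ?_⟩
  · intro v c c' hcc
    dsimp only
    obtain ⟨a, ha⟩ := Finset.card_eq_one.1 (hcard v c)
    have h2 : F v c' = {a} := (hdep v c c' hcc) ▸ ha
    simp [ha, h2]
  · intro c _
    obtain ⟨v, hv⟩ := hwin c
    refine ⟨v, ?_⟩
    obtain ⟨a, ha⟩ := Finset.card_eq_one.1 (hcard v c)
    dsimp only
    rw [ha] at hv
    simp [ha]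
    simpa using hv

theorem winnable_of_winFn {D : V → V → Prop} {h : V → ℕ}
    (H : WinFn D h (fun _ _ => True)) : HatGame.Winnable D (fun _ => 1) h := by
  obtain ⟨f, hdep, hwin⟩ := H
  refine ⟨fun v c => {f v c}, ?_, ?_, ?_⟩
  · intro v c c' hcc; dsimp only; rw [hdep v c c' hcc]
  · intro v c; simp
  · intro c; obtain ⟨v, hv⟩ := hwin c (fun _ => trivial)
    exact ⟨v, by simp [← hv]⟩

theorem winFn_mono {D : V → V → Prop} {h : V → ℕ}
    {P Q : ∀ u : V, Fin (h u) → Prop} (hPQ : ∀ u x, P u x → Q u x)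
    (H : WinFn D h Q) : WinFn D h P := by
  obtain ⟨f, hdep, hwin⟩ := H
  exact ⟨f, hdep, fun c hc => hwin c (fun u => hPQ u (c u) (hc u))⟩

/-- Transport a strategy along injections of color sets. -/
theorem winFn_transport {D : V → V → Prop} {h h' : V → ℕ}
    (hpos : ∀ u, 0 < h' u)
    (φ : ∀ u, Fin (h' u) → Fin (h u)) (hinj : ∀ u, Injective (φ u))
    (H : WinFn D h (fun u x => ∃ y, φ u y = x)) :
    WinFn D h' (fun _ _ => True) := by
  obtain ⟨f, hdep, hwin⟩ := H
  haveI : ∀ u, Nonempty (Fin (h' u)) := fun u => ⟨⟨0, hpos u⟩⟩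
  refine ⟨fun v c => invFun (φ v) (f v (fun u => φ u (c u))), ?_, ?_⟩
  · intro v c c' hcc
    have : f v (fun u => φ u (c u)) = f v (fun u => φ u (c' u)) := by
      apply hdep
      intro u hu; rw [hcc u hu]
    dsimp only
    rw [this]
  · intro c _
    obtain ⟨v, hv⟩ := hwin (fun u => φ u (c u)) (fun u => ⟨c u, rfl⟩)
    refine ⟨v, ?_⟩
    dsimp only
    rw [← hv, leftInverse_invFun (hinj v)]

/-- No strategy wins a game with no visibility and all hatnesses at least 2. -/
theorem not_winFn_blind {D : V → V → Prop} {h : V → ℕ}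
    (hno : ∀ v u, ¬ D v u) (hh2 : ∀ v, 2 ≤ h v) : ¬ WinFn D h (fun _ _ => True) := by
  rintro ⟨f, hdep, hwin⟩
  have hpos : ∀ u, 0 < h u := fun u => lt_of_lt_of_le (by norm_num) (hh2 u)
  set c₀ : ∀ u : V, Fin (h u) := fun u => ⟨0, hpos u⟩ with hc₀
  set c : ∀ u : V, Fin (h u) := fun u =>
    if f u c₀ = ⟨0, hpos u⟩ then ⟨1, lt_of_lt_of_le (by norm_num) (hh2 u)⟩ else ⟨0, hpos u⟩ with hc
  obtain ⟨v, hv⟩ := hwin c (fun _ => trivial)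
  have he : f v c = f v c₀ := hdep v c c₀ (fun u hu => absurd hu (hno v u))
  rw [he] at hv
  by_cases h0 : f v c₀ = ⟨0, hpos v⟩
  · rw [hc] at hv; simp only at hv
    rw [if_pos h0, h0] at hv
    exact absurd (congrArg Fin.val hv) (by norm_num)
  · rw [hc] at hv; simp only at hv
    rw [if_neg h0] at hv
    exact h0 hv.symm


/-- A leaf with hatness at least 3 can be removed without affecting winnability. -/
theorem winFn_leaf3 {D D' : V → V → Prop} {h : V → ℕ} {l w : V}
    (hlw : l ≠ w) (hpos : ∀ u, 0 < h u) (hl3 : 3 ≤ h l)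
    (hsee : ∀ u, D l u → u = w)
    (hseen : ∀ u, D u l → u = w)
    (hD' : ∀ u v, D u v → u ≠ l → v ≠ l → D' u v)
    (H : WinFn D h (fun _ _ => True)) : WinFn D' h (fun _ _ => True) := by
  classical
  obtain ⟨f, hdep, hwin⟩ := H
  set a₀ : Fin (h l) := ⟨0, hpos l⟩ with ha₀
  set Xf : (Fin (h l) → Fin (h w)) → Finset (Fin (h w)) := fun g =>
    Finset.univ.filter (fun x => h l - 1 ≤ (Finset.univ.filter (fun a => g a = x)).card) with hXf
  have Xuniq : ∀ g : Fin (h l) → Fin (h w), ∀ x ∈ Xf g, ∀ y ∈ Xf g, x = y := by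
    intro g x hx y hy
    by_contra hxy
    rw [hXf, Finset.mem_filter] at hx hy
    obtain ⟨-, hx2⟩ := hx
    obtain ⟨-, hy2⟩ := hy
    set A := Finset.univ.filter (fun a => g a = x) with hA
    set B := Finset.univ.filter (fun a => g a = y) with hB
    have hdisj : Disjoint A B := by
      rw [hA, hB, Finset.disjoint_filter]
      intro a _ hax hay
      exact hxy (hax ▸ hay ▸ rfl)
    have hcup := Finset.card_union_of_disjoint hdisj
    have hle : (A ∪ B).card ≤ h l := by
      have := Finset.card_le_univ (A ∪ B)
      simpa using this
    omega
  set wg : (Fin (h l) → Fin (h w)) → Fin (h w) := fun g =>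
    if hne : (Xf g).Nonempty then (Xf g).min' hne else g a₀ with hwg
  refine ⟨fun v c' =>
    if hvl : v = l then Fin.cast (congrArg h hvl.symm) a₀
    else if hvw : v = w then Fin.cast (congrArg h hvw.symm) (wg (fun a => f w (update c' l a)))
    else f v (update c' l a₀), ?_, ?_⟩
  · intro v c c' hcc
    dsimp only
    by_cases hvl : v = l
    · rw [dif_pos hvl, dif_pos hvl]
    rw [dif_neg hvl, dif_neg hvl]
    by_cases hvw : v = w
    · subst hvw
      rw [dif_pos rfl, dif_pos rfl]
      have hg : (fun a => f v (update c l a)) = (fun a => f v (update c' l a)) := by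
        funext a
        apply hdep
        intro u hu
        rcases eq_or_ne u l with rfl | hul
        · simp
        · rw [update_of_ne hul, update_of_ne hul]
          exact hcc u (hD' v u hu hvl hul)
      rw [hg]
    · rw [dif_neg hvw, dif_neg hvw]
      apply hdep
      intro u hu
      rcases eq_or_ne u l with rfl | hul
      · simp
      · rw [update_of_ne hul, update_of_ne hul]
        refine hcc u (hD' v u hu hvl hul)
  · intro c' _
    dsimp only
    have hfl : ∀ a : Fin (h l), f l (update c' l a) = f l (update c' l a₀) := by
      intro a
      apply hdep
      intro u hu
      have := hsee u hu
      subst this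
      rw [update_of_ne (Ne.symm hlw), update_of_ne (Ne.symm hlw)]
    set fl0 := f l (update c' l a₀) with hfl0
    by_cases hcase : ∃ a : Fin (h l), a ≠ fl0 ∧ ∃ v, v ≠ l ∧ v ≠ w ∧ c' v = f v (update c' l a)
    · obtain ⟨a, hane, v, hvl, hvw, hv⟩ := hcase
      refine ⟨v, ?_⟩
      rw [dif_neg hvl, dif_neg hvw]
      have : f v (update c' l a₀) = f v (update c' l a) := by
        apply hdep
        intro u hu
        rcases eq_or_ne u l with rfl | hul
        · exact absurd (hseen v hu) hvw
        · rw [update_of_ne hul, update_of_ne hul]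
      rw [this]; exact hv
    · push_neg at hcase
      have hkey : ∀ a : Fin (h l), a ≠ fl0 → c' w = f w (update c' l a) := by
        intro a hane
        obtain ⟨v, hv⟩ := hwin (update c' l a) (fun _ => trivial)
        rcases eq_or_ne v l with rfl | hvl
        · rw [update_self] at hv
          rw [hfl a] at hv
          exact absurd hv hane
        · rw [update_of_ne hvl] at hv
          rcases eq_or_ne v w with rfl | hvw
          · exact hv
          · exact absurd hv (hcase a hane v hvl hvw)
      set g : Fin (h l) → Fin (h w) := fun a => f w (update c' l a) with hg
      have hsub : Finset.univ.erase fl0 ⊆ Finset.univ.filter (fun a => g a = c' w) := by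
        intro a ha
        rw [Finset.mem_erase] at ha
        rw [Finset.mem_filter]
        exact ⟨Finset.mem_univ _, (hkey a ha.1).symm⟩
      have hcard : h l - 1 ≤ (Finset.univ.filter (fun a => g a = c' w)).card := by
        have := Finset.card_le_card hsub
        rw [Finset.card_erase_of_mem (Finset.mem_univ _)] at this
        simpa using this
      have hmem : c' w ∈ Xf g := by
        rw [hXf, Finset.mem_filter]
        exact ⟨Finset.mem_univ _, hcard⟩
      have hne : (Xf g).Nonempty := ⟨_, hmem⟩
      have hmin : wg g = c' w := by
        rw [hwg]
        dsimp only
        rw [dif_pos hne]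
        exact Xuniq g _ ((Xf g).min'_mem hne) _ hmem
      refine ⟨w, ?_⟩
      rw [dif_neg (Ne.symm hlw), dif_pos rfl]
      rw [hmin]
      apply Fin.ext
      simp


/-- A leaf with hatness 2 can be removed, halving (rounded up) its neighbor's hatness. -/
theorem winFn_halve {D D' : V → V → Prop} {h h' : V → ℕ} {l w : V}
    (hlw : l ≠ w) (hpos : ∀ u, 0 < h u) (hl2 : h l = 2)
    (hsee : ∀ u, D l u → u = w)
    (hD' : ∀ u v, D u v → u ≠ l → v ≠ l → D' u v)
    (hw' : h' w = h w - h w / 2) (hother : ∀ u, u ≠ w → h' u = h u)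
    (H : WinFn D h (fun _ _ => True)) :
    WinFn D' h' (fun _ _ => True) := by
  classical
  obtain ⟨f, hdep, hwin⟩ := H
  set c₀ : ∀ u : V, Fin (h u) := fun u => ⟨0, hpos u⟩ with hc₀
  set Fl : Fin (h w) → Fin (h l) := fun x => f l (update c₀ w x) with hFl
  -- pigeonhole: some value of the leaf's guess has a small fiber
  obtain ⟨b, hb⟩ : ∃ b : Fin (h l), (Finset.univ.filter (fun x => Fl x = b)).card ≤ h w / 2 := by
    set b0 : Fin (h l) := ⟨0, by omega⟩ with hb0
    set b1 : Fin (h l) := ⟨1, by omega⟩ with hb1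
    have hsplit := Finset.card_filter_add_card_filter_not
      (s := Finset.univ) (p := fun x : Fin (h w) => Fl x = b0)
    rw [Finset.card_univ, Fintype.card_fin] at hsplit
    have heqn : (Finset.univ.filter (fun x : Fin (h w) => ¬ Fl x = b0))
        = Finset.univ.filter (fun x : Fin (h w) => Fl x = b1) := by
      apply Finset.filter_congr
      intro x _
      constructor
      · intro hx
        have hvlt := (Fl x).isLt
        apply Fin.ext
        have : (Fl x).val ≠ 0 := fun hc => hx (Fin.ext (by simpa using hc))
        simp only [hb1]
        omega
      · intro hx h0
        rw [hx] at h0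
        exact absurd (congrArg Fin.val h0) (by simp [hb0, hb1])
    rw [heqn] at hsplit
    rcases le_or_gt ((Finset.univ.filter (fun x => Fl x = b0)).card) (h w / 2) with hc | hc
    · exact ⟨b0, hc⟩
    · exact ⟨b1, by omega⟩
  set Sb : Finset (Fin (h w)) := Finset.univ.filter (fun x => Fl x ≠ b) with hSb
  have hSbcard : h w - h w / 2 ≤ Sb.card := by
    have hsplit := Finset.card_filter_add_card_filter_not
      (s := Finset.univ) (p := fun x : Fin (h w) => Fl x = b)
    rw [Finset.card_univ, Fintype.card_fin] at hsplit
    have : Sb.card = (Finset.univ.filter (fun x : Fin (h w) => ¬ Fl x = b)).card := rfl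
    omega
  have hm : h' w ≤ Sb.card := by rw [hw']; exact hSbcard
  have hposw : 0 < h w := hpos w
  have hpos' : ∀ u, 0 < h' u := by
    intro u
    rcases eq_or_ne u w with rfl | hu
    · rw [hw']; omega
    · rw [hother u hu]; exact hpos u
  -- the injections
  set φ : ∀ u : V, Fin (h' u) → Fin (h u) := fun u =>
    if hu : u = w then
      fun i => Fin.cast (congrArg h hu.symm)
        (Sb.orderEmbOfCardLe (hu ▸ hm) i)
    else fun i => Fin.cast (hother u hu) i with hφ
  have hinj : ∀ u, Injective (φ u) := by
    intro u
    by_cases hu : u = w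
    · subst hu
      have he : φ u = fun i => Fin.cast (congrArg h rfl)
          ((Sb.orderEmbOfCardLe hm) i) := by
        rw [hφ]; exact dif_pos rfl
      rw [he]
      intro i j hij
      have h2 := Fin.cast_injective (congrArg h rfl) hij
      exact (Sb.orderEmbOfCardLe hm).injective h2
    · have he : φ u = fun i => Fin.cast (hother u hu) i := by
        rw [hφ]; exact dif_neg hu
      rw [he]
      exact Fin.cast_injective _
  apply winFn_transport hpos' φ hinj
  apply winFn_mono (Q := fun u x => ∀ (hu : u = w), Fl (Fin.cast (congrArg h hu) x) ≠ b)
  · intro u x hx hu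
    subst hu
    obtain ⟨y, hy⟩ := hx
    rw [hφ] at hy
    dsimp only at hy
    rw [dif_pos rfl] at hy
    intro hcontra
    have hmem := Finset.mem_filter.1 (Sb.orderEmbOfCardLe_mem hm y)
    apply hmem.2
    rw [← hcontra]
    congr 1
  -- core: winning strategy on D' for colorings of w avoiding fiber of b
  refine ⟨fun v c' =>
    if hvl : v = l then Fin.cast (congrArg h hvl.symm) ⟨0, hpos l⟩
    else f v (update c' l b), ?_, ?_⟩
  · intro v c c' hcc
    dsimp only
    by_cases hvl : v = l
    · rw [dif_pos hvl, dif_pos hvl]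
    · rw [dif_neg hvl, dif_neg hvl]
      apply hdep
      intro u hu
      rcases eq_or_ne u l with rfl | hul
      · simp
      · rw [update_of_ne hul, update_of_ne hul]
        exact hcc u (hD' v u hu hvl hul)
  · intro c' hP
    obtain ⟨v, hv⟩ := hwin (update c' l b) (fun _ => trivial)
    rcases eq_or_ne v l with hveq | hvl
    · exfalso
      rw [hveq] at hv
      rw [update_self] at hv
      have hfl : f l (update c' l b) = Fl (c' w) := by
        apply hdep
        intro u hu
        have := hsee u hu
        subst this
        rw [update_of_ne (Ne.symm hlw), update_self]
      rw [hfl] at hv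
      have := hP w rfl
      have hcast : Fin.cast (congrArg h rfl) (c' w) = c' w := by
        apply Fin.ext; simp
      rw [hcast] at this
      exact this hv.symm
    · refine ⟨v, ?_⟩
      dsimp only
      rw [dif_neg hvl, ← hv, update_of_ne hvl]






theorem coe_isAcyclic {G : SimpleGraph V} (hG : G.IsAcyclic) (H : G.Subgraph) :
    H.coe.IsAcyclic := by
  intro v c hc
  exact hG (c.map H.hom) ((Walk.map_isCycle_iff_of_injective Subgraph.hom_injective).2 hc)

theorem exists_leaf {W : Type*} [Fintype W] (H : SimpleGraph W) (hH : H.IsTree)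
    (h2 : 2 ≤ Fintype.card W) : ∃ x y, H.Adj x y ∧ ∀ z, H.Adj x z → z = y := by
  classical
  have hcard := hH.card_edgeFinset
  have hsum := H.sum_degrees_eq_twice_card_edges
  have hdegpos : ∀ x : W, 0 < H.degree x := by
    intro x
    obtain ⟨y, hy⟩ := Fintype.exists_ne_of_one_lt_card (by omega) x
    obtain ⟨p⟩ := hH.isConnected.preconnected x y
    cases p with
    | nil => exact absurd rfl hy.symm
    | cons h q => exact H.degree_pos_iff_exists_adj _ |>.2 ⟨_, h⟩
  have hex : ∃ x : W, H.degree x = 1 := by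
    by_contra hno
    push_neg at hno
    have h2le : ∀ x : W, 2 ≤ H.degree x := by
      intro x
      have := hdegpos x
      have := hno x
      omega
    have hge : 2 * Fintype.card W ≤ ∑ v : W, H.degree v := by
      calc 2 * Fintype.card W = ∑ _v : W, 2 := by
              rw [Finset.sum_const, Finset.card_univ, smul_eq_mul, mul_comm]
        _ ≤ ∑ v : W, H.degree v := Finset.sum_le_sum (fun i _ => h2le i)
    omega
  obtain ⟨x, hx⟩ := hex
  obtain ⟨y, hy⟩ := Finset.card_eq_one.1 hx
  refine ⟨x, y, ?_, ?_⟩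
  · rw [← H.mem_neighborFinset, hy]; exact Finset.mem_singleton_self _
  · intro z hz
    have : z ∈ H.neighborFinset x := (H.mem_neighborFinset _ _).2 hz
    rw [hy] at this
    exact Finset.mem_singleton.1 this

theorem reachable_deleteVerts {G : SimpleGraph V} {T : G.Subgraph} {l : V}
    {x y : ↥T.verts} (p : T.coe.Walk x y) (hp : ∀ z ∈ p.support, (z : V) ≠ l)
    (hx : (x : V) ∈ (T.deleteVerts {l}).verts) (hy : (y : V) ∈ (T.deleteVerts {l}).verts) :
    (T.deleteVerts {l}).coe.Reachable ⟨(x : V), hx⟩ ⟨(y : V), hy⟩ := by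
  induction p with
  | nil => exact Reachable.refl _
  | @cons a b c hab q ih =>
    have hbmem : (b : V) ∈ (T.deleteVerts {l}).verts := by
      rw [SimpleGraph.Subgraph.deleteVerts_verts]
      refine ⟨b.2, ?_⟩
      simp only [Set.mem_singleton_iff]
      exact hp b (by simp [Walk.support_cons, Walk.start_mem_support])
    have hadj : (T.deleteVerts {l}).coe.Adj ⟨(a : V), hx⟩ ⟨(b : V), hbmem⟩ := by
      rw [SimpleGraph.Subgraph.coe_adj]
      rw [SimpleGraph.Subgraph.deleteVerts_adj]
      refine ⟨a.2, ?_, b.2, ?_, ?_⟩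
      · simp only [Set.mem_singleton_iff]
        exact hp a (by simp)
      · simp only [Set.mem_singleton_iff]
        exact hp b (by simp [Walk.support_cons, Walk.start_mem_support])
      · exact hab
    exact hadj.reachable.trans (ih (fun z hz => hp z (by simp [Walk.support_cons]; right; exact hz)) hbmem hy)

theorem delete_leaf_connected {G : SimpleGraph V} {T : G.Subgraph} {l w : V}
    (hT : T.coe.IsTree) (hl : l ∈ T.verts) (hw : w ∈ T.verts) (hlw : T.Adj l w)
    (hleaf : ∀ u, T.Adj l u → u = w) :
    (T.deleteVerts {l}).coe.Connected := by
  have hlnw : l ≠ w := (T.adj_sub hlw).ne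
  have hwmem : w ∈ (T.deleteVerts {l}).verts := by
    rw [SimpleGraph.Subgraph.deleteVerts_verts]
    exact ⟨hw, by simp [Ne.symm hlnw]⟩
  have hreach : ∀ a : ↥(T.deleteVerts {l}).verts,
      (T.deleteVerts {l}).coe.Reachable a ⟨w, hwmem⟩ := by
    intro a
    classical
    have hmem2 : (a : V) ∈ T.verts \ {l} := by
      rw [← SimpleGraph.Subgraph.deleteVerts_verts]
      exact a.2
    have hav : (a : V) ∈ T.verts := hmem2.1
    have hanl : (a : V) ≠ l := by simpa using hmem2.2
    obtain ⟨r⟩ := hT.isConnected.preconnected ⟨(a : V), hav⟩ ⟨l, hl⟩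
    have p : T.coe.Path ⟨(a : V), hav⟩ ⟨l, hl⟩ := r.toPath
    obtain ⟨pw, hpw⟩ := p
    have hrev : pw.reverse.IsPath := hpw.reverse
    have hne : (⟨l, hl⟩ : ↥T.verts) ≠ ⟨(a : V), hav⟩ := by
      intro hcontra
      exact hanl (congrArg Subtype.val hcontra).symm
    obtain ⟨z, hadj, q, hq⟩ := Walk.exists_eq_cons_of_ne hne pw.reverse
    rw [hq, Walk.cons_isPath_iff] at hrev
    have hz : z = (⟨w, hw⟩ : ↥T.verts) := by
      apply Subtype.ext
      exact hleaf (z : V) (by simpa using hadj)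
    subst hz
    have hzmem : (w : V) ∈ (T.deleteVerts {l}).verts := hwmem
    have havoid : ∀ el ∈ q.support, (el : V) ≠ l := by
      intro el hel hc
      apply hrev.2
      have : el = (⟨l, hl⟩ : ↥T.verts) := Subtype.ext hc
      rwa [this] at hel
    have hres := reachable_deleteVerts q havoid hzmem
      (⟨hav, fun hc => hanl hc⟩ : (a : V) ∈ T.verts \ {l})
    exact (hres.symm : _)
  have hpre : (T.deleteVerts {l}).coe.Preconnected := by
    intro a b
    exact (hreach a).trans (hreach b).symm
  rw [SimpleGraph.connected_iff]
  exact ⟨hpre, ⟨⟨w, hwmem⟩⟩⟩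







theorem zmod2_excl : ∀ x y A B : ZMod 2, A + B = 1 → x + A ≠ y → y + B ≠ x → False := by decide

theorem sufficiency [Fintype V] {G : SimpleGraph V}
    (h : V → ℕ) (hh : ∀ v, 2 ≤ h v) (T' : G.Subgraph) (hT' : T'.coe.IsTree)
    (hbound : ∀ v ∈ T'.verts, h v ≤ 2 ^ (T'.neighborSet v).ncard) :
    WinFn G.Adj h (fun _ _ => True) := by
  classical
  have hpos : ∀ v, 0 < h v := fun v => lt_of_lt_of_le (by norm_num) (hh v)
  haveI : ∀ v, Nonempty (Fin (h v)) := fun v => ⟨⟨0, hpos v⟩⟩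
  -- ranks
  set rank : V → ℕ := fun v => ((Fintype.equivFin V) v : ℕ) with hrank
  have hrankinj : Injective rank := by
    intro a b hab
    exact (Fintype.equivFin V).injective (Fin.ext hab)
  set flp : V → V → ZMod 2 := fun v u => if rank v < rank u then 0 else 1 with hflp
  have hflipsum : ∀ v u : V, v ≠ u → flp v u + flp u v = 1 := by
    intro v u hne
    have hrne : rank v ≠ rank u := fun hc => hne (hrankinj hc)
    rw [hflp]
    rcases lt_or_gt_of_ne hrne with hlt | hgt
    · simp only [if_pos hlt, if_neg (not_lt_of_gt hlt)]; ring
    · simp only [if_neg (not_lt_of_gt hgt), if_pos hgt]; ring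
  -- embeddings of colors into bit vectors over neighborhoods
  have hembex : ∀ v ∈ T'.verts,
      ∃ e : Fin (h v) → (↥(T'.neighborSet v) → ZMod 2), Injective e := by
    intro v hv
    have hcard : Fintype.card (Fin (h v)) ≤ Fintype.card (↥(T'.neighborSet v) → ZMod 2) := by
      rw [Fintype.card_fin, Fintype.card_fun]
      have h2 : Fintype.card (ZMod 2) = 2 := by simp
      rw [h2]
      refine le_trans (hbound v hv) ?_
      apply Nat.pow_le_pow_right (by norm_num)
      rw [Set.ncard_eq_toFinset_card']
      rw [Set.toFinset_card]
    obtain ⟨e⟩ := Function.Embedding.nonempty_of_card_le hcard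
    exact ⟨e, e.injective⟩
  set emb : ∀ v : V, Fin (h v) → (↥(T'.neighborSet v) → ZMod 2) := fun v =>
    if hv : v ∈ T'.verts then Classical.choose (hembex v hv) else fun _ _ => 0 with hemb
  have hembinj : ∀ v (hv : v ∈ T'.verts), Injective (emb v) := by
    intro v hv
    rw [hemb]
    simp only [dif_pos hv]
    exact Classical.choose_spec (hembex v hv)
  -- the guessed bit vector
  set bt : (∀ u : V, Fin (h u)) → ∀ v : V, (↥(T'.neighborSet v) → ZMod 2) := fun c v u =>
    emb (u : V) (c (u : V)) ⟨v, (SimpleGraph.Subgraph.mem_neighborSet .. ).2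
      ((SimpleGraph.Subgraph.mem_neighborSet .. ).1 u.2).symm⟩ + flp v (u : V) with hbt
  refine ⟨fun v c => if hv : v ∈ T'.verts then invFun (emb v) (bt c v) else ⟨0, hpos v⟩,
    ?_, ?_⟩
  · intro v c c' hcc
    dsimp only
    by_cases hv : v ∈ T'.verts
    · rw [dif_pos hv, dif_pos hv]
      have : bt c v = bt c' v := by
        funext u
        rw [hbt]
        dsimp only
        rw [hcc (u : V) (T'.adj_sub ((SimpleGraph.Subgraph.mem_neighborSet ..).1 u.2))]
      rw [this]
    · rw [dif_neg hv, dif_neg hv]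
  · intro c _
    by_contra hno
    push_neg at hno
    -- each vertex of T' loses along some incident edge
    have hlose : ∀ vv : ↥T'.verts, ∃ u : ↥(T'.neighborSet (vv : V)),
        bt c (vv : V) u ≠ emb (vv : V) (c (vv : V)) u := by
      intro vv
      by_contra hall
      push_neg at hall
      have hbte : bt c (vv : V) = emb (vv : V) (c (vv : V)) := funext hall
      apply hno (vv : V)
      rw [dif_pos vv.2, hbte, leftInverse_invFun (hembinj _ vv.2)]
    -- the map from vertices to lost edges is injective
    set nb : ∀ vv : ↥T'.verts, ↥(T'.neighborSet (vv : V)) := fun vv =>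
      Classical.choose (hlose vv) with hnb
    have hnbspec : ∀ vv : ↥T'.verts,
        bt c (vv : V) (nb vv) ≠ emb (vv : V) (c (vv : V)) (nb vv) :=
      fun vv => Classical.choose_spec (hlose vv)
    -- exclusivity : two adjacent vertices cannot both lose their shared edge
    have hexcl : ∀ (v u : V) (hvu : u ∈ T'.neighborSet v) (huv : v ∈ T'.neighborSet u),
        emb u (c u) ⟨v, huv⟩ + flp v u ≠ emb v (c v) ⟨u, hvu⟩ →
        emb v (c v) ⟨u, hvu⟩ + flp u v ≠ emb u (c u) ⟨v, huv⟩ → False := by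
      intro v u hvu huv h1 h2
      have hne : v ≠ u := by
        intro hc
        subst hc
        exact G.loopless.irrefl v (T'.adj_sub ((SimpleGraph.Subgraph.mem_neighborSet ..).1 hvu))
      exact zmod2_excl _ _ _ _ (hflipsum v u hne) h1 h2
    set φ : ↥T'.verts → Sym2 ↥T'.verts := fun vv =>
      s(vv, ⟨((nb vv : V) : V), T'.neighborSet_subset_verts _ (nb vv).2⟩) with hφ
    have hφmem : ∀ vv, φ vv ∈ T'.coe.edgeFinset := by
      intro vv
      rw [SimpleGraph.mem_edgeFinset, hφ]
      dsimp only
      rw [SimpleGraph.mem_edgeSet, SimpleGraph.Subgraph.coe_adj]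
      exact (SimpleGraph.Subgraph.mem_neighborSet ..).1 (nb vv).2
    have hφinj : Injective φ := by
      intro a b hab
      rw [hφ] at hab
      dsimp only at hab
      rw [Sym2.eq_iff] at hab
      rcases hab with ⟨h1, -⟩ | ⟨h1, h2⟩
      · exact h1
      · -- a = other end of b's lost edge and vice versa : both lose edge (a,b)
        exfalso
        have ha : ((nb b : V) : V) = (a : V) := (congrArg Subtype.val h1).symm
        have hb : ((nb a : V) : V) = (b : V) := congrArg Subtype.val h2
        have hsa := hnbspec a
        have hsb := hnbspec b
        rw [hbt] at hsa hsb
        dsimp only at hsa hsb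
        -- rewrite memberships
        have hmem1 : ((b : V) : V) ∈ T'.neighborSet (a : V) := hb ▸ (nb a).2
        have hmem2 : ((a : V) : V) ∈ T'.neighborSet (b : V) := ha ▸ (nb b).2
        apply hexcl (a : V) (b : V) hmem1 hmem2
        · have : (nb a) = (⟨(b : V), hmem1⟩ : ↥(T'.neighborSet (a : V))) :=
            Subtype.ext hb
          rw [this] at hsa
          convert hsa using 2
        · have : (nb b) = (⟨(a : V), hmem2⟩ : ↥(T'.neighborSet (b : V))) :=
            Subtype.ext ha
          rw [this] at hsb
          convert hsb using 2
    have hcard1 : Fintype.card ↥T'.verts ≤ T'.coe.edgeFinset.card := by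
      have := Fintype.card_le_of_injective
        (fun vv => (⟨φ vv, hφmem vv⟩ : {e // e ∈ T'.coe.edgeFinset}))
        (fun a b hab => hφinj (congrArg Subtype.val hab))
      rwa [Fintype.card_coe] at this
    have hcard2 := hT'.card_edgeFinset
    have : T'.coe.edgeFinset.card = T'.coe.edgeFinset.card := rfl
    omega





theorem necessity [Fintype V] {G : SimpleGraph V} (hGac : G.IsAcyclic) :
    ∀ (n : ℕ) (h : V → ℕ) (T : G.Subgraph), T.verts.ncard = n → T.coe.IsTree →
    (∀ v, 1 ≤ h v) → (∀ v, v ∉ T.verts → 2 ≤ h v) →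
    WinFn T.Adj h (fun _ _ => True) →
    ∃ T' : G.Subgraph, T' ≤ T ∧ T'.coe.IsTree ∧
      ∀ v ∈ T'.verts, h v ≤ 2 ^ (T'.neighborSet v).ncard := by
  intro n
  induction n using Nat.strong_induction_on with
  | _ n IH =>
  intro h T hn hT h1 h2out hwin
  classical
  -- Step 0 : if some vertex of `T` has hatness 1, a single vertex does the job
  by_cases hone : ∃ v ∈ T.verts, h v = 1
  · obtain ⟨v, hv, hv1⟩ := hone
    refine ⟨G.singletonSubgraph v, (SimpleGraph.singletonSubgraph_le_iff v T).2 hv,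
      ⟨SimpleGraph.Subgraph.singletonSubgraph_connected.coe, coe_isAcyclic hGac _⟩, ?_⟩
    intro u hu
    rw [SimpleGraph.singletonSubgraph_verts, Set.mem_singleton_iff] at hu
    subst hu
    rw [SimpleGraph.neighborSet_singletonSubgraph, Set.ncard_empty]
    omega
  push_neg at hone
  have hall2 : ∀ v, 2 ≤ h v := by
    intro v
    by_cases hv : v ∈ T.verts
    · have := h1 v
      have := hone v hv
      omega
    · exact h2out v hv
  have hpos : ∀ v, 0 < h v := fun v => lt_of_lt_of_le (by norm_num) (hall2 v)
  -- nonemptiness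
  have hne : T.verts.Nonempty := by
    obtain ⟨⟨v, hv⟩⟩ := hT.isConnected.nonempty
    exact ⟨v, hv⟩
  have hnpos : 1 ≤ n := by
    rw [← hn]
    exact (Set.ncard_pos (Set.toFinite _)).2 hne
  rcases eq_or_lt_of_le hnpos with hn1 | hn2
  · -- single vertex, all hatnesses ≥ 2 : not winnable, contradiction
    exfalso
    obtain ⟨v, hv⟩ := Set.ncard_eq_one.1 (hn ▸ hn1.symm)
    have hDempty : ∀ a b : V, ¬ T.Adj a b := by
      intro a b hab
      have ha : a ∈ T.verts := T.edge_vert hab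
      have hb : b ∈ T.verts := T.edge_vert hab.symm
      rw [hv, Set.mem_singleton_iff] at ha hb
      subst ha; subst hb
      exact G.loopless.irrefl _ (T.adj_sub hab)
    exact not_winFn_blind hDempty hall2 hwin
  · -- at least two vertices : find a leaf
    have hcard2 : 2 ≤ Fintype.card ↥T.verts := by
      have : T.verts.ncard = Fintype.card ↥T.verts := by
        rw [Set.ncard_eq_toFinset_card', Set.toFinset_card]
      omega
    obtain ⟨x, y, hadj, huniq⟩ := exists_leaf T.coe hT hcard2
    set l : V := (x : V) with hldef
    set w : V := (y : V) with hwdef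
    have hlmem : l ∈ T.verts := x.2
    have hwmem : w ∈ T.verts := y.2
    have hTlw : T.Adj l w := hadj
    have hleaf : ∀ u, T.Adj l u → u = w := by
      intro u hu
      have humem : u ∈ T.verts := T.edge_vert hu.symm
      have : T.coe.Adj x ⟨u, humem⟩ := hu
      have := huniq ⟨u, humem⟩ this
      exact congrArg Subtype.val this
    have hlw : l ≠ w := (T.adj_sub hTlw).ne
    set T₂ := T.deleteVerts {l} with hT₂def
    have hT₂verts : T₂.verts = T.verts \ {l} := SimpleGraph.Subgraph.deleteVerts_verts
    have hT₂tree : T₂.coe.IsTree :=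
      ⟨delete_leaf_connected hT hlmem hwmem hTlw hleaf, coe_isAcyclic hGac _⟩
    have hn₂ : T₂.verts.ncard = n - 1 := by
      rw [hT₂verts, Set.ncard_diff_singleton_of_mem hlmem, hn]
    have hlnotin₂ : l ∉ T₂.verts := by
      rw [hT₂verts]
      exact fun hc => hc.2 rfl
    have hD'2 : ∀ a b, T.Adj a b → a ≠ l → b ≠ l → T₂.Adj a b := by
      intro a b hab hal hbl
      rw [hT₂def, SimpleGraph.Subgraph.deleteVerts_adj]
      exact ⟨T.edge_vert hab, by simpa using hal, T.edge_vert hab.symm, by simpa using hbl, hab⟩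
    have hseen : ∀ u, T.Adj u l → u = w := fun u hu => hleaf u hu.symm
    rcases eq_or_lt_of_le (hall2 l) with hl2 | hl3
    · -- leaf of hatness 2 : halve the neighbor w
      set h' : V → ℕ := fun u => if u = w then h w - h w / 2 else h u with hh'
      have hw' : h' w = h w - h w / 2 := by rw [hh']; simp
      have hother : ∀ u, u ≠ w → h' u = h u := by
        intro u hu; rw [hh']; simp [hu]
      have hwin₂ : WinFn T₂.Adj h' (fun _ _ => True) :=
        winFn_halve hlw hpos hl2.symm hleaf hD'2 hw' hother hwin
      have h1' : ∀ v, 1 ≤ h' v := by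
        intro v
        rcases eq_or_ne v w with rfl | hvw
        · rw [hw']
          have := hall2 w
          omega
        · rw [hother v hvw]; exact h1 v
      have h2out' : ∀ v, v ∉ T₂.verts → 2 ≤ h' v := by
        intro v hv
        rcases eq_or_ne v w with rfl | hvw
        · exfalso
          apply hv
          rw [hT₂verts]
          exact ⟨hwmem, by simpa using (Ne.symm hlw)⟩
        · rw [hother v hvw]; exact hall2 v
      obtain ⟨T'', hle'', htree'', hcond''⟩ :=
        IH (n - 1) (by omega) h' T₂ hn₂ hT₂tree h1' h2out' hwin₂
      by_cases hwT : w ∈ T''.verts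
      · -- attach the leaf l
        have hGlw : G.Adj l w := T.adj_sub hTlw
        set T' : G.Subgraph := T'' ⊔ G.subgraphOfAdj hGlw with hT'def
        have hlnotin : l ∉ T''.verts := fun hc => hlnotin₂ (hle''.1 hc)
        have hT'le : T' ≤ T := by
          rw [hT'def]
          apply sup_le (hle''.trans (SimpleGraph.Subgraph.deleteVerts_le))
          exact SimpleGraph.subgraphOfAdj_le_of_adj T hTlw
        have hT''conn : T''.Connected := SimpleGraph.Subgraph.connected_iff'.2 htree''.isConnected
        have hT'conn : T'.Connected := by
          apply SimpleGraph.Subgraph.connected_sup hT''conn.preconnected (SimpleGraph.Subgraph.subgraphOfAdj_connected hGlw).preconnected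
          refine ⟨w, ?_⟩
          rw [SimpleGraph.Subgraph.verts_inf]
          exact ⟨hwT, by simp⟩
        have hT'tree : T'.coe.IsTree := ⟨hT'conn.coe, coe_isAcyclic hGac _⟩
        refine ⟨T', hT'le, hT'tree, ?_⟩
        intro v hv
        rw [hT'def, SimpleGraph.Subgraph.verts_sup] at hv
        have hnsup : T'.neighborSet v =
            T''.neighborSet v ∪ (G.subgraphOfAdj hGlw).neighborSet v := by
          rw [hT'def]
          exact SimpleGraph.Subgraph.neighborSet_sup v
        rcases eq_or_ne v l with rfl | hvl
        · -- the new leaf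
          have hns : T'.neighborSet l = {w} := by
            rw [hnsup]
            have h1'' : T''.neighborSet l = ∅ := by
              rw [Set.eq_empty_iff_forall_notMem]
              intro z hz
              exact hlnotin (T''.edge_vert ((SimpleGraph.Subgraph.mem_neighborSet ..).1 hz))
            rw [h1'', SimpleGraph.neighborSet_fst_subgraphOfAdj, Set.empty_union]
          rw [hns, Set.ncard_singleton]
          omega
        · rcases eq_or_ne v w with rfl | hvw
          · -- the halved neighbor
            have hns : T'.neighborSet w = insert l (T''.neighborSet w) := by
              rw [hnsup, SimpleGraph.neighborSet_snd_subgraphOfAdj, Set.union_singleton]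
            have hlns : l ∉ T''.neighborSet w :=
              fun hc => hlnotin (T''.neighborSet_subset_verts _ hc)
            have hncard : (T'.neighborSet w).ncard = (T''.neighborSet w).ncard + 1 := by
              rw [hns, Set.ncard_insert_of_notMem hlns (Set.toFinite _)]
            have hcd := hcond'' w hwT
            rw [hw'] at hcd
            rw [hncard, pow_succ]
            have := hall2 w
            omega
          · -- an old vertex
            have hvT'' : v ∈ T''.verts := by
              rcases hv with hv | hv
              · exact hv
              · exfalso
                rw [SimpleGraph.subgraphOfAdj_verts] at hv
                rcases hv with hv | hv
                · exact hvl hv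
                · exact hvw hv
            have hns : T'.neighborSet v = T''.neighborSet v := by
              rw [hnsup, SimpleGraph.neighborSet_subgraphOfAdj_of_ne_of_ne hGlw hvl hvw,
                Set.union_empty]
            have hcd := hcond'' v hvT''
            rw [hother v hvw] at hcd
            rw [hns]
            exact hcd
      · -- w itself is not used : T'' works as is
        refine ⟨T'', hle''.trans (SimpleGraph.Subgraph.deleteVerts_le), htree'', ?_⟩
        intro v hv
        have hvw : v ≠ w := fun hc => hwT (hc ▸ hv)
        have hcd := hcond'' v hv
        rw [hother v hvw] at hcd
        exact hcd
    · -- leaf of hatness ≥ 3 : simply remove it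
      have hwin₂ : WinFn T₂.Adj h (fun _ _ => True) :=
        winFn_leaf3 hlw hpos hl3 hleaf hseen hD'2 hwin
      obtain ⟨T'', hle'', htree'', hcond''⟩ :=
        IH (n - 1) (by omega) h T₂ hn₂ hT₂tree h1
          (fun v hv => hall2 v) hwin₂
      exact ⟨T'', hle''.trans (SimpleGraph.Subgraph.deleteVerts_le), htree'', hcond''⟩


theorem top_coe_connected {G : SimpleGraph V} (hG : G.Connected) :
    (⊤ : G.Subgraph).coe.Connected := by
  have hlift : ∀ (a b : V), G.Walk a b →
      (⊤ : G.Subgraph).coe.Reachable ⟨a, Set.mem_univ a⟩ ⟨b, Set.mem_univ b⟩ := by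
    intro a b p
    induction p with
    | nil => exact Reachable.refl _
    | @cons a' b' c' hab q ih =>
      have hadj : (⊤ : G.Subgraph).coe.Adj ⟨a', Set.mem_univ a'⟩ ⟨b', Set.mem_univ b'⟩ := by
        rw [SimpleGraph.Subgraph.coe_adj]
        exact SimpleGraph.Subgraph.top_adj.2 hab
      exact hadj.reachable.trans ih
  rw [SimpleGraph.connected_iff]
  constructor
  · rintro ⟨a, ha⟩ ⟨b, hb⟩
    obtain ⟨p⟩ := hG.preconnected a b
    exact hlift a b p
  · obtain ⟨v⟩ := hG.nonempty
    exact ⟨⟨v, Set.mem_univ v⟩⟩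

end HatTree

/-- A Latvian game on a tree is winnable iff the tree contains a subtree `T'`
with `h v ≤ 2 ^ deg_{T'} v` for every vertex `v` of `T'`. -/
theorem latvian_tree_winnable_iff {V : Type*} [Fintype V]
    (G : SimpleGraph V) (hG : G.IsTree) (h : V → ℕ) (hh : ∀ v, 2 ≤ h v) :
    HatGame.Winnable G.Adj (fun _ => 1) h ↔
      ∃ T' : G.Subgraph, T'.coe.IsTree ∧
        ∀ v ∈ T'.verts, h v ≤ 2 ^ (T'.neighborSet v).ncard := by
  constructor
  · intro hwin
    have htop_adj : (⊤ : G.Subgraph).Adj = G.Adj := by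
      ext a b; exact SimpleGraph.Subgraph.top_adj
    have hwfn : HatTree.WinFn (⊤ : G.Subgraph).Adj h (fun _ _ => True) := by
      rw [htop_adj]
      exact HatTree.winFn_of_winnable hwin
    have htoptree : (⊤ : G.Subgraph).coe.IsTree :=
      ⟨HatTree.top_coe_connected hG.isConnected, HatTree.coe_isAcyclic hG.2 _⟩
    obtain ⟨T', -, htree, hcond⟩ := HatTree.necessity hG.2
      (⊤ : G.Subgraph).verts.ncard h ⊤ rfl htoptree
      (fun v => le_trans (by norm_num) (hh v))
      (fun v hv => absurd (Set.mem_univ v) hv)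
      hwfn
    exact ⟨T', htree, hcond⟩
  · rintro ⟨T', htree, hcond⟩
    exact HatTree.winnable_of_winFn (HatTree.sufficiency h hh T' htree hcond)
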